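/- Let S be a C-semigroup that is a P-semigroup, and T = S ∪ {x} for a gap x of S. If T is a P-semigroup with x = m(T), then x ∈ SG(S), x ≺ m(S), and there exists p ∈ P with x + p ∈ S. -/
import Mathlib


/-- A monomial order on `ℕ^d`: a total order compatible with addition,
with `0` as least element. -/
def IsMonomialOrder (d : ℕ) (le : (Fin d → ℕ) → (Fin d → ℕ) → Prop) : Prop :=
  (∀ a, le a a) ∧ (∀ a b, le a b → le b a → a = b) ∧
  (∀ a b c, le a b → le b c → le a c) ∧ (∀ a b, le a b ∨ le b a) ∧
  (∀ a b c, le a b → le (a + c) (b + c)) ∧ (∀ a, le 0 a)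

/-- `S` is a `C`-semigroup: a submonoid of the cone `C` with finite complement in `C`. -/
def IsCSgp {d : ℕ} (C : AddSubmonoid (Fin d → ℕ)) (S : Set (Fin d → ℕ)) : Prop :=
  0 ∈ S ∧ (∀ x ∈ S, ∀ y ∈ S, x + y ∈ S) ∧ S ⊆ (C : Set (Fin d → ℕ)) ∧
    ((C : Set (Fin d → ℕ)) \ S).Finite

/-- `S` is a `P`-semigroup: for every nonzero `s ∈ S` there is `p ∈ P` with `s + p ∈ S`. -/
def IsPSgp {d : ℕ} (P : Set (Fin d → ℕ)) (S : Set (Fin d → ℕ)) : Prop :=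
  ∀ s ∈ S, s ≠ 0 → ∃ p ∈ P, s + p ∈ S

/-- `a` is a minimal generator of `S`. -/
def IsMinGen {d : ℕ} (S : Set (Fin d → ℕ)) (a : Fin d → ℕ) : Prop :=
  a ∈ S ∧ a ≠ 0 ∧ ¬ ∃ x ∈ S, ∃ y ∈ S, x ≠ 0 ∧ y ≠ 0 ∧ a = x + y

theorem stmt_17 {d : ℕ} (C : AddSubmonoid (Fin d → ℕ)) (hCfg : C.FG)
    (P : Set (Fin d → ℕ)) (hPfin : P.Finite) (hP0 : (0 : Fin d → ℕ) ∉ P)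
    (le : (Fin d → ℕ) → (Fin d → ℕ) → Prop) (hle : IsMonomialOrder d le)
    (S : Set (Fin d → ℕ)) (hS : IsCSgp C S) (hSP : IsPSgp P S)
    (x : Fin d → ℕ) (hx : x ∈ (C : Set (Fin d → ℕ)) \ S)
    (hT : IsCSgp C (insert x S)) (hTP : IsPSgp P (insert x S))
    (hxmT : ∀ t ∈ insert x S, t ≠ 0 → le x t) :
    (x + x ∈ S ∧ ∀ s ∈ S, s ≠ 0 → x + s ∈ S) ∧
      (∀ s ∈ S, s ≠ 0 → le x s ∧ x ≠ s) ∧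
      ∃ p ∈ P, x + p ∈ S := by
  obtain ⟨hxC, hxS⟩ := hx
  have hx0 : x ≠ 0 := fun h => hxS (h ▸ hS.1)
  have key : ∀ y, x + y ∈ insert x S → y ≠ 0 → x + y ∈ S := by
    intro y hy hy0
    rcases hy with h | h
    · exact absurd (add_left_cancel (a := x) (by simpa using h)) hy0
    · exact h
  refine ⟨⟨?_, ?_⟩, ?_, ?_⟩
  · exact key x (hT.2.1 x (Set.mem_insert _ _) x (Set.mem_insert _ _)) hx0
  · intro s hs hs0
    exact key s (hT.2.1 x (Set.mem_insert _ _) s (Set.mem_insert_of_mem _ hs)) hs0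
  · intro s hs hs0
    exact ⟨hxmT s (Set.mem_insert_of_mem _ hs) hs0, fun h => hxS (h ▸ hs)⟩
  · obtain ⟨p, hp, hxp⟩ := hTP x (Set.mem_insert _ _) hx0
    exact ⟨p, hp, key p hxp (fun h => hP0 (h ▸ hp))⟩
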